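/- Let r ≥ 2 and for each s ≥ 2 define the polynomial P(k_1,…,k_s) = Σ_{X_1 ⊔ X_2 = {3,…,s}} k_1 · (k_1 + K_{X_1} − 1)_{|X_1| − 1} · (k_2 + K_{X_2} − 1)_{|X_2|}, where the sum is over ordered pairs of disjoint sets with union {3,…,s}, K_X = Σ_{u ∈ X} k_u, and the X_1 = ∅ summand is interpreted as (k_2 + K_{{3,…,s}} − 1)_{s−2}. Then P satisfies the finite difference equation P(k_1 + 1, k_2, …, k_r) − P(k_1, k_2, …, k_r) = Σ_{i=3}^{r} P(k_1 + k_i, k_2, …, k_{i−1}, k_{i+1}, …, k_r), where on the right-hand side P is the corresponding polynomial in r − 1 variables evaluated at the listed arguments (the variable k_i omitted and k_1 replaced by k_1 + k_i). -/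

import Mathlib

/-- The falling factorial `(a)_m = a(a−1)⋯(a−m+1)`, for `m ≥ 0` (with `(a)_0 = 1`). -/
def ffall {R : Type*} [CommRing R] (a : R) (m : ℕ) : R :=
  ∏ i ∈ Finset.range m, (a - (i : R))

lemma ffall_zero {R : Type*} [CommRing R] (a : R) : ffall a 0 = 1 := rfl

lemma ffall_succ {R : Type*} [CommRing R] (a : R) (m : ℕ) :
    ffall a (m + 1) = ffall a m * (a - m) := Finset.prod_range_succ _ _

lemma ffall_succ' {R : Type*} [CommRing R] (a : R) (m : ℕ) :
    ffall (a + 1) (m + 1) = (a + 1) * ffall a m := by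
  unfold ffall
  rw [Finset.prod_range_succ']
  rw [mul_comm]
  congr 1
  · norm_num
  · exact Finset.prod_congr rfl (fun i _ => by push_cast; ring)

lemma pair_swap {M : Type*} [AddCommMonoid M] (S : Finset ℕ) (F : ℕ → Finset ℕ → M) :
    ∑ i ∈ S, ∑ Y ∈ (S.erase i).powerset, F i Y
      = ∑ X ∈ S.powerset, ∑ i ∈ X, F i (X.erase i) := by
  classical
  rw [Finset.sum_sigma', Finset.sum_sigma']
  refine Finset.sum_nbij' (fun p => (⟨insert p.1 p.2, p.1⟩ : Σ _ : Finset ℕ, ℕ))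
    (fun q => (⟨q.2, q.1.erase q.2⟩ : Σ _ : ℕ, Finset ℕ)) ?_ ?_ ?_ ?_ ?_
  · rintro ⟨i, Y⟩ hp
    simp only [Finset.mem_sigma, Finset.mem_powerset] at hp ⊢
    refine ⟨?_, Finset.mem_insert_self _ _⟩
    exact Finset.insert_subset hp.1 (hp.2.trans (Finset.erase_subset _ _))
  · rintro ⟨X, i⟩ hq
    simp only [Finset.mem_sigma, Finset.mem_powerset] at hq ⊢
    exact ⟨hq.1 hq.2, Finset.erase_subset_erase _ hq.1⟩
  · rintro ⟨i, Y⟩ hp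
    simp only [Finset.mem_sigma, Finset.mem_powerset] at hp
    have : i ∉ Y := fun h => (Finset.mem_erase.mp (hp.2 h)).1 rfl
    simp [Finset.erase_insert this]
  · rintro ⟨X, i⟩ hq
    simp only [Finset.mem_sigma, Finset.mem_powerset] at hq
    simp [Finset.insert_erase hq.2]
  · rintro ⟨i, Y⟩ hp
    simp only [Finset.mem_sigma, Finset.mem_powerset] at hp
    have : i ∉ Y := fun h => (Finset.mem_erase.mp (hp.2 h)).1 rfl
    simp [Finset.erase_insert this]


/-- The polynomial
`P(k_1, …, k_s) = Σ_{X₁ ⊔ X₂ = {3,…,s}} k_1 · (k_1 + K_{X₁} − 1)_{|X₁|−1} · (k_2 + K_{X₂} − 1)_{|X₂|}`,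
where the sum is over all ordered pairs of disjoint (possibly empty) sets with union
`{3, …, s}`, `K_X = Σ_{u ∈ X} k_u`, and the summand with `X₁ = ∅` is interpreted
(via the convention `(a)_{−1} = 1/(a+1)`, cancelling the factor `k_1`) as
`(k_2 + K_{{3,…,s}} − 1)_{s−2}`. The variables are fed in as a function `k : ℕ → R`. -/
def Pfun {R : Type*} [CommRing R] (s : ℕ) (k : ℕ → R) : R :=
  ∑ X₁ ∈ (Finset.Icc 3 s).powerset,
    if X₁ = ∅ then ffall (k 2 + (∑ u ∈ Finset.Icc 3 s, k u) - 1) (s - 2)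
    else
      k 1 * ffall (k 1 + (∑ u ∈ X₁, k u) - 1) (X₁.card - 1) *
        ffall (k 2 + (∑ u ∈ Finset.Icc 3 s \ X₁, k u) - 1) (Finset.Icc 3 s \ X₁).card

noncomputable def Gaux (r i : ℕ) (Y : Finset ℕ) : MvPolynomial ℕ ℚ :=
  if Y = ∅ then
    ffall (MvPolynomial.X 2 + (∑ u ∈ (Finset.Icc 3 r).erase i, MvPolynomial.X u) - 1) (r - 3)
  else
    (MvPolynomial.X 1 + MvPolynomial.X i) *
      ffall (MvPolynomial.X 1 + MvPolynomial.X i + (∑ u ∈ Y, MvPolynomial.X u) - 1)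
        (Y.card - 1) *
      ffall (MvPolynomial.X 2 + (∑ u ∈ (Finset.Icc 3 r).erase i \ Y, MvPolynomial.X u) - 1)
        ((Finset.Icc 3 r).erase i \ Y).card

def phi (i j : ℕ) : ℕ := if j < i then j else j + 1
def psi (i j : ℕ) : ℕ := if j < i then j else j - 1

lemma phi_inj (i : ℕ) : Function.Injective (phi i) := by
  intro a b h
  unfold phi at h
  split_ifs at h <;> omega

lemma psi_phi (i j : ℕ) : psi i (phi i j) = j := by
  unfold phi psi; split_ifs <;> omega

lemma phi_psi (i j : ℕ) (h : j ≠ i) : phi i (psi i j) = j := by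
  unfold phi psi; split_ifs <;> omega

lemma image_phi (r i : ℕ) (h3 : 3 ≤ i) (hir : i ≤ r) :
    (Finset.Icc 3 (r - 1)).image (phi i) = (Finset.Icc 3 r).erase i := by
  ext a
  simp only [Finset.mem_image, Finset.mem_erase, Finset.mem_Icc]
  constructor
  · rintro ⟨j, hj, rfl⟩
    unfold phi; split_ifs <;> omega
  · rintro ⟨hne, h3a, har⟩
    refine ⟨psi i a, ?_, phi_psi i a hne⟩
    unfold psi; split_ifs <;> omega

lemma reindex (r i : ℕ) (h3 : 3 ≤ i) (hir : i ≤ r) :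
    Pfun (r - 1) (fun j =>
        if j = 1 then MvPolynomial.X 1 + MvPolynomial.X i
        else if j < i then MvPolynomial.X j else (MvPolynomial.X (j + 1) : MvPolynomial ℕ ℚ))
      = ∑ Y ∈ ((Finset.Icc 3 r).erase i).powerset, Gaux r i Y := by
  classical
  unfold Pfun
  refine Finset.sum_nbij' (fun X₁ => X₁.image (phi i)) (fun Y => Y.image (psi i)) ?_ ?_ ?_ ?_ ?_
  · intro X₁ hX₁
    rw [Finset.mem_powerset] at hX₁ ⊢
    rw [← image_phi r i h3 hir]
    exact Finset.image_subset_image hX₁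
  · intro Y hY
    rw [Finset.mem_powerset] at hY ⊢
    rw [← image_phi r i h3 hir] at hY
    intro a ha
    rcases Finset.mem_image.mp ha with ⟨b, hb, rfl⟩
    rcases Finset.mem_image.mp (hY hb) with ⟨c, hc, rfl⟩
    rwa [psi_phi]
  · intro X₁ _
    try dsimp only
    rw [Finset.image_image]
    have : ∀ j ∈ X₁, (psi i ∘ phi i) j = id j := fun j _ => psi_phi i j
    rw [Finset.image_congr (fun j hj => this j hj), Finset.image_id]
  · intro Y hY
    rw [Finset.mem_powerset] at hY
    try dsimp only
    rw [Finset.image_image]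
    have : ∀ j ∈ Y, (phi i ∘ psi i) j = id j := fun j hj =>
      phi_psi i j (Finset.mem_erase.mp (hY hj)).1
    rw [Finset.image_congr (fun j hj => this j hj), Finset.image_id]
  · intro X₁ hX₁
    rw [Finset.mem_powerset] at hX₁
    have hk : ∀ u ∈ Finset.Icc 3 (r - 1),
        (if u = 1 then MvPolynomial.X 1 + MvPolynomial.X i
         else if u < i then MvPolynomial.X u else (MvPolynomial.X (u + 1) : MvPolynomial ℕ ℚ))
          = MvPolynomial.X (phi i u) := by
      intro u hu
      rw [Finset.mem_Icc] at hu
      have : u ≠ 1 := by omega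
      rw [if_neg this]
      unfold phi
      split_ifs <;> rfl
    have hsumX : ∀ T : Finset ℕ, T ⊆ Finset.Icc 3 (r - 1) →
        (∑ u ∈ T, (if u = 1 then MvPolynomial.X 1 + MvPolynomial.X i
          else if u < i then MvPolynomial.X u else (MvPolynomial.X (u + 1) : MvPolynomial ℕ ℚ)))
        = ∑ u ∈ T.image (phi i), MvPolynomial.X u := by
      intro T hT
      rw [Finset.sum_image (fun a _ b _ h => phi_inj i h)]
      exact Finset.sum_congr rfl (fun u hu => hk u (hT hu))
    unfold Gaux
    have h2 : (2 : ℕ) ≠ 1 := by omega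
    have h2i : 2 < i := by omega
    have hcard : ∀ T : Finset ℕ, (T.image (phi i)).card = T.card :=
      fun T => Finset.card_image_of_injective T (phi_inj i)
    by_cases hE : X₁ = ∅
    · subst hE
      rw [if_pos rfl, if_pos (by simp)]
      rw [hsumX _ (le_refl _), image_phi r i h3 hir]
      have h13 : r - 1 - 2 = r - 3 := by omega
      rw [h13]
      simp [h2i]
    · rw [if_neg hE, if_neg (by simpa [Finset.image_eq_empty] using hE)]
      have himgsd : (Finset.Icc 3 (r-1) \ X₁).image (phi i)
          = (Finset.Icc 3 r).erase i \ X₁.image (phi i) := by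
        rw [Finset.image_sdiff _ _ (phi_inj i), image_phi r i h3 hir]
      rw [hsumX X₁ hX₁, hsumX _ Finset.sdiff_subset, ← himgsd]
      simp only [hcard]
      simp [h2i]


lemma erase_sdiff_erase (S X : Finset ℕ) (i : ℕ) (hi : i ∈ X) :
    S.erase i \ X.erase i = S \ X := by
  ext a
  simp only [Finset.mem_sdiff, Finset.mem_erase]
  constructor
  · rintro ⟨⟨hai, haS⟩, h⟩
    exact ⟨haS, fun haX => h ⟨hai, haX⟩⟩
  · rintro ⟨haS, haX⟩
    have hai : a ≠ i := fun h => haX (h ▸ hi)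
    exact ⟨⟨hai, haS⟩, fun h => haX h.2⟩


/-- The finite difference equation for `P`: for `r ≥ 2`,
`P(k_1 + 1, k_2, …, k_r) − P(k_1, …, k_r) = Σ_{i=3}^{r} P(k_1 + k_i, k_2, …, k̂_i, …, k_r)`,
where on the right-hand side `P` is the corresponding polynomial in `r − 1` variables,
with `k_i` omitted and `k_1` replaced by `k_1 + k_i` (so the `j`-th argument is
`k_1 + k_i` for `j = 1`, `k_j` for `2 ≤ j ≤ i − 1`, and `k_{j+1}` for `i ≤ j ≤ r − 1`).
This is an identity in `ℚ[k_1, …, k_r]` (the variable `i` is `k_i`). -/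
theorem stmt13 (r : ℕ) (hr : 2 ≤ r) :
    Pfun r (fun i => if i = 1 then MvPolynomial.X 1 + 1 else (MvPolynomial.X i : MvPolynomial ℕ ℚ))
        - Pfun r (fun i => MvPolynomial.X i)
      = ∑ i ∈ Finset.Icc 3 r,
          Pfun (r - 1) (fun j =>
            if j = 1 then MvPolynomial.X 1 + MvPolynomial.X i
            else if j < i then MvPolynomial.X j else MvPolynomial.X (j + 1)) := by
  classical
  have hRHS : (∑ i ∈ Finset.Icc 3 r,
          Pfun (r - 1) (fun j =>
            if j = 1 then MvPolynomial.X 1 + MvPolynomial.X i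
            else if j < i then MvPolynomial.X j else (MvPolynomial.X (j + 1) : MvPolynomial ℕ ℚ)))
      = ∑ i ∈ Finset.Icc 3 r, ∑ Y ∈ ((Finset.Icc 3 r).erase i).powerset, Gaux r i Y := by
    refine Finset.sum_congr rfl ?_
    intro i hi
    rw [Finset.mem_Icc] at hi
    exact reindex r i hi.1 hi.2
  rw [hRHS, pair_swap]
  rw [Pfun, Pfun, ← Finset.sum_sub_distrib]
  refine Finset.sum_congr rfl ?_
  intro X₁ hX₁
  rw [Finset.mem_powerset] at hX₁
  have hsum : ∀ T : Finset ℕ, T ⊆ Finset.Icc 3 r →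
      (∑ u ∈ T, (if u = 1 then MvPolynomial.X 1 + 1 else (MvPolynomial.X u : MvPolynomial ℕ ℚ)))
        = ∑ u ∈ T, MvPolynomial.X u := by
    intro T hT
    refine Finset.sum_congr rfl ?_
    intro u hu
    have : u ≠ 1 := by
      have := Finset.mem_Icc.mp (hT hu); omega
    rw [if_neg this]
  by_cases hE : X₁ = ∅
  · subst hE
    rw [if_pos rfl, if_pos rfl, hsum _ (Finset.Subset.refl _)]
    norm_num
  · rw [if_neg hE, if_neg hE, hsum X₁ hX₁, hsum _ Finset.sdiff_subset]
    simp only [reduceIte, Nat.one_lt_ofNat, if_true, show (2:ℕ) ≠ 1 by norm_num, if_false]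
    set K : MvPolynomial ℕ ℚ := ∑ u ∈ X₁, MvPolynomial.X u with hK
    set B : MvPolynomial ℕ ℚ :=
      ffall (MvPolynomial.X 2 + (∑ u ∈ Finset.Icc 3 r \ X₁, MvPolynomial.X u) - 1)
        (Finset.Icc 3 r \ X₁).card with hB
    rcases Nat.exists_eq_add_of_lt (Finset.card_pos.mpr (Finset.nonempty_of_ne_empty hE))
      with ⟨m, hm⟩
    rw [zero_add] at hm
    rcases m with _ | m''
    · -- card = 1
      rcases Finset.card_eq_one.mp hm with ⟨i₀, rfl⟩
      have hi₀ : i₀ ∈ Finset.Icc 3 r := hX₁ (Finset.mem_singleton_self i₀)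
      rw [Finset.sum_singleton, Finset.erase_singleton, Gaux, if_pos rfl]
      rw [hm]
      have hsd : Finset.Icc 3 r \ {i₀} = (Finset.Icc 3 r).erase i₀ := by
        rw [Finset.sdiff_singleton_eq_erase]
      have hcard : ((Finset.Icc 3 r).erase i₀).card = r - 3 := by
        rw [Finset.card_erase_of_mem hi₀, Nat.card_Icc]; omega
      rw [hB, hsd, hcard]
      simp [ffall_zero, Finset.sum_singleton]
      ring
    · -- card = m'' + 2
      have habs : ∀ i ∈ X₁, Gaux r i (X₁.erase i)
          = (MvPolynomial.X 1 + MvPolynomial.X i) *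
              (ffall (MvPolynomial.X 1 + K - 1) m'' * B) := by
        intro i hi
        have hce : (X₁.erase i).card = m'' + 1 := by
          rw [Finset.card_erase_of_mem hi, hm]
          omega
        have hne : X₁.erase i ≠ ∅ := by
          intro h
          rw [h] at hce
          simp at hce
        rw [Gaux, if_neg hne, hce]
        have hsumerase : (∑ u ∈ X₁.erase i, MvPolynomial.X u)
            = K - MvPolynomial.X i := by
          have := Finset.sum_erase_add X₁ (fun u => (MvPolynomial.X u : MvPolynomial ℕ ℚ)) hi
          rw [← hK] at this  -- maybe not needed
          linear_combination this
        have harg : MvPolynomial.X 1 + MvPolynomial.X i + (∑ u ∈ X₁.erase i, MvPolynomial.X u) - 1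
            = MvPolynomial.X 1 + K - (1 : MvPolynomial ℕ ℚ) := by
          rw [hsumerase]; ring
        rw [harg, erase_sdiff_erase _ _ _ hi, ← hB]
        have : m'' + 1 - 1 = m'' := rfl
        rw [this]
        ring
      rw [Finset.sum_congr rfl habs, ← Finset.sum_mul, Finset.sum_add_distrib,
        Finset.sum_const, hm, ← hK]
      have harg1 : MvPolynomial.X 1 + 1 + K - 1
          = (MvPolynomial.X 1 + K - 1) + (1 : MvPolynomial ℕ ℚ) := by ring
      have h1 : m'' + 1 + 1 - 1 = m'' + 1 := rfl
      rw [h1, harg1, ffall_succ', ffall_succ]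
      rw [nsmul_eq_mul]
      push_cast
      ring
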